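/- Let N ≥ 1 be an integer. Suppose given abelian groups Z, V₁, V₂, P₁, P₂, W, V′ and homomorphisms a₁ : Z → V₁, e₁ : V₁ → P₁, c₁ : P₁ → W, d : W → V′, a₂ : Z → V₂, e₂ : V₂ → P₂, c₂ : P₂ → W, ρ : V₁ → V₂, σ : P₁ → P₂ such that: (i) e₁∘a₁ = 0, d∘c₁ = 0, the top row is exact at P₁ (ker c₁ = im e₁) and at W (ker d = im c₁); (ii) the bottom row is exact at V₂ (ker e₂ = im a₂) and at P₂ (ker c₂ = im e₂); (iii) the diagram commutes: a₂ = ρ∘a₁, e₂∘ρ = σ∘e₁, and c₂∘σ = c₁; (iv) V₁ is N-divisible (every element of V₁ is N times an element of V₁), and V₂ and V′ have no N-torsion. If x ∈ P₁ and y ∈ P₂ satisfy σ(x) = N·y, then there exists ℓ ∈ P₁ with N·ℓ = x and σ(ℓ) = y. -/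
import Mathlib


/-- A diagram chase with abelian groups: given the two exact rows
`Z → V₁ → P₁ → W → V′` (exact at `P₁` and `W`, with `e₁∘a₁ = 0` and `d∘c₁ = 0`) and
`Z → V₂ → P₂ → W` (exact at `V₂` and `P₂`), commuting via `ρ : V₁ → V₂`, `σ : P₁ → P₂`
(`a₂ = ρ∘a₁`, `e₂∘ρ = σ∘e₁`, `c₂∘σ = c₁`), with `V₁` `N`-divisible and `V₂`, `V′`
having no `N`-torsion: if `σ(x) = N·y`, then there is `ℓ ∈ P₁` with `N·ℓ = x` and
`σ(ℓ) = y`. -/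
theorem stmt8 (N : ℕ) (hN : 1 ≤ N)
    (Z V₁ V₂ P₁ P₂ W V' : Type*)
    [AddCommGroup Z] [AddCommGroup V₁] [AddCommGroup V₂] [AddCommGroup P₁]
    [AddCommGroup P₂] [AddCommGroup W] [AddCommGroup V']
    (a₁ : Z →+ V₁) (e₁ : V₁ →+ P₁) (c₁ : P₁ →+ W) (d : W →+ V')
    (a₂ : Z →+ V₂) (e₂ : V₂ →+ P₂) (c₂ : P₂ →+ W)
    (ρ : V₁ →+ V₂) (σ : P₁ →+ P₂)
    -- (i) the top row:
    (hea : ∀ z : Z, e₁ (a₁ z) = 0)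
    (hdc : ∀ p : P₁, d (c₁ p) = 0)
    (hexP₁ : ∀ p : P₁, c₁ p = 0 ↔ ∃ v : V₁, e₁ v = p)
    (hexW : ∀ w : W, d w = 0 ↔ ∃ p : P₁, c₁ p = w)
    -- (ii) the bottom row:
    (hexV₂ : ∀ v : V₂, e₂ v = 0 ↔ ∃ z : Z, a₂ z = v)
    (hexP₂ : ∀ p : P₂, c₂ p = 0 ↔ ∃ v : V₂, e₂ v = p)
    -- (iii) commutativity:
    (hcomm₁ : ∀ z : Z, a₂ z = ρ (a₁ z))
    (hcomm₂ : ∀ v : V₁, e₂ (ρ v) = σ (e₁ v))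
    (hcomm₃ : ∀ p : P₁, c₂ (σ p) = c₁ p)
    -- (iv) divisibility and torsion-freeness:
    (hdiv : ∀ v : V₁, ∃ v' : V₁, N • v' = v)
    (htor₂ : ∀ v : V₂, N • v = 0 → v = 0)
    (htor' : ∀ v : V', N • v = 0 → v = 0)
    (x : P₁) (y : P₂) (hxy : σ x = N • y) :
    ∃ ℓ : P₁, N • ℓ = x ∧ σ ℓ = y := by
  -- c₁ x = N • c₂ y
  have hc1x : c₁ x = N • c₂ y := by
    rw [← hcomm₃, hxy, map_nsmul]
  -- d (c₂ y) = 0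
  have hd : d (c₂ y) = 0 := by
    apply htor'
    rw [← map_nsmul, ← hc1x, hdc]
  obtain ⟨p, hp⟩ := (hexW (c₂ y)).mp hd
  -- y - σ p is killed by c₂
  have hyp : c₂ (y - σ p) = 0 := by
    rw [map_sub, hcomm₃, hp, sub_self]
  obtain ⟨v, hv⟩ := (hexP₂ (y - σ p)).mp hyp
  -- x - N • p comes from V₁
  have hxp : c₁ (x - N • p) = 0 := by
    rw [map_sub, map_nsmul, hc1x, hp, sub_self]
  obtain ⟨u, hu⟩ := (hexP₁ (x - N • p)).mp hxp
  -- e₂ (ρ u - N • v) = 0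
  have he2 : e₂ (ρ u - N • v) = 0 := by
    have h1 : σ (x - N • p) = N • (y - σ p) := by
      rw [map_sub, hxy, map_nsmul, smul_sub]
    rw [map_sub, hcomm₂, hu, h1, ← hv, map_nsmul, sub_self]
  obtain ⟨z, hz⟩ := (hexV₂ (ρ u - N • v)).mp he2
  obtain ⟨u', hu'⟩ := hdiv (u - a₁ z)
  have hρu' : ρ u' = v := by
    have := htor₂ (ρ u' - v) (by
      rw [smul_sub, ← map_nsmul, hu', map_sub, ← hcomm₁, hz]
      abel)
    exact sub_eq_zero.mp this
  refine ⟨p + e₁ u', ?_, ?_⟩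
  · rw [smul_add, ← map_nsmul, hu', map_sub, hea, sub_zero, hu]
    abel
  · rw [map_add, ← hcomm₂, hρu', hv]
    abel
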